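/- Let G be a topologically finitely generated profinite group. Then for every positive integer n, G has only finitely many open subgroups of index n. -/

import Mathlib

open QuotientGroup

/-- The permutation representation of `G` on `G ⧸ H` transported to `Fin n`. -/
noncomputable def permRepAux {G : Type*} [Group G] (H : Subgroup G) {n : ℕ}
    (e : G ⧸ H ≃ Fin n) : G →* Equiv.Perm (Fin n) :=
  MonoidHom.mk' (fun g => e.permCongr (MulAction.toPerm g)) (by
    intro a b
    ext x
    simp [Equiv.permCongr_apply, MulAction.toPerm_apply, mul_smul])

lemma permRepAux_apply {G : Type*} [Group G] (H : Subgroup G) {n : ℕ}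
    (e : G ⧸ H ≃ Fin n) (g : G) (x : Fin n) :
    permRepAux H e g x = e (g • e.symm x) := rfl

lemma mem_iff_permRepAux {G : Type*} [Group G] (H : Subgroup G) {n : ℕ}
    (e : G ⧸ H ≃ Fin n) (g : G) :
    g ∈ H ↔ permRepAux H e g (e (QuotientGroup.mk 1)) = e (QuotientGroup.mk 1) := by
  rw [permRepAux_apply, Equiv.symm_apply_apply, e.apply_eq_iff_eq,
    MulAction.Quotient.smul_mk, QuotientGroup.eq]
  simp

lemma closed_coset_aux {G : Type*} [Group G] [TopologicalSpace G] [IsTopologicalGroup G]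
    (H : Subgroup G) (hH : IsClosed (H : Set G)) (a c : G) :
    IsClosed {g : G | (QuotientGroup.mk (g * a) : G ⧸ H) = QuotientGroup.mk c} := by
  have h : {g : G | (QuotientGroup.mk (g * a) : G ⧸ H) = QuotientGroup.mk c}
      = (fun g => (g * a)⁻¹ * c) ⁻¹' (H : Set G) := by
    ext g
    simp [QuotientGroup.eq]
  rw [h]
  exact hH.preimage (by continuity)

lemma closed_level_aux {G : Type*} [Group G] [TopologicalSpace G] [IsTopologicalGroup G]
    (H : Subgroup G) (hH : IsClosed (H : Set G)) {n : ℕ} (e : G ⧸ H ≃ Fin n) (x y : Fin n) :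
    IsClosed {g : G | permRepAux H e g x = y} := by
  obtain ⟨a, ha⟩ := QuotientGroup.mk_surjective (e.symm x)
  obtain ⟨c, hc⟩ := QuotientGroup.mk_surjective (e.symm y)
  have h : {g : G | permRepAux H e g x = y}
      = {g : G | (QuotientGroup.mk (g * a) : G ⧸ H) = QuotientGroup.mk c} := by
    ext g
    rw [Set.mem_setOf_eq, Set.mem_setOf_eq, permRepAux_apply, ← ha, hc,
      MulAction.Quotient.smul_mk, smul_eq_mul]
    constructor
    · intro h'
      rw [← h', Equiv.symm_apply_apply]
    · intro h'
      rw [h', Equiv.apply_symm_apply]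
  rw [h]
  exact closed_coset_aux H hH a c

/-- A topologically finitely generated profinite group has only finitely many
open subgroups of each finite index `n`. -/
theorem finite_openSubgroups_of_index
    (G : Type*) [Group G] [TopologicalSpace G] [IsTopologicalGroup G]
    [CompactSpace G] [T2Space G] [TotallyDisconnectedSpace G]
    (hfg : ∃ T : Finset G, (Subgroup.closure (T : Set G)).topologicalClosure = ⊤)
    (n : ℕ) (hn : 0 < n) :
    {H : Subgroup G | IsOpen (H : Set G) ∧ H.index = n}.Finite := by
  classical
  obtain ⟨T, hT⟩ := hfg
  rw [← Set.finite_coe_iff]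
  set S := {H : Subgroup G | IsOpen (H : Set G) ∧ H.index = n} with hS
  have hfin : ∀ H : S, Finite (G ⧸ (H : Subgroup G)) := by
    rintro ⟨H, hHo, hHi⟩
    refine Nat.finite_of_card_ne_zero ?_
    have h : Nat.card (G ⧸ H) = n := hHi
    rw [h]
    exact hn.ne'
  let E : ∀ H : S, (G ⧸ (H : Subgroup G)) ≃ Fin n := fun H =>
    haveI := hfin H
    Finite.equivFinOfCardEq (H.2.2 : Nat.card (G ⧸ (H : Subgroup G)) = n)
  -- the invariant: values of the permutation representation on T, plus the base point
  refine Finite.of_injective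
    (fun H : S => ((fun t : T => permRepAux (H : Subgroup G) (E H) t,
      E H (QuotientGroup.mk 1)) : (T → Equiv.Perm (Fin n)) × Fin n)) ?_
  rintro H K hHK
  obtain ⟨h1, h2⟩ := Prod.mk.injEq .. ▸ hHK
  have hEq : permRepAux (H : Subgroup G) (E H) = permRepAux (K : Subgroup G) (E K) := by
    -- the equalizer is a closed subgroup containing T, hence everything
    set φ := permRepAux (H : Subgroup G) (E H)
    set ψ := permRepAux (K : Subgroup G) (E K)
    have hTsub : (T : Set G) ⊆ (φ.eqLocus ψ : Set G) := by
      intro t ht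
      exact congrFun h1 ⟨t, ht⟩
    have hle : Subgroup.closure (T : Set G) ≤ φ.eqLocus ψ :=
      (Subgroup.closure_le _).mpr hTsub
    have hclosed : IsClosed (φ.eqLocus ψ : Set G) := by
      have hs : (φ.eqLocus ψ : Set G)
          = ⋂ x : Fin n, ⋃ y : Fin n,
              ({g : G | φ g x = y} ∩ {g : G | ψ g x = y}) := by
        ext g
        simp only [Set.mem_iInter, Set.mem_iUnion, Set.mem_inter_iff, Set.mem_setOf_eq,
          SetLike.mem_coe, MonoidHom.eqLocus, Subgroup.mem_mk, MonoidHom.eqLocusM, Submonoid.mem_mk, Subsemigroup.mem_mk]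
        constructor
        · intro h x
          exact ⟨φ g x, rfl, by rw [h]⟩
        · intro h
          ext x
          obtain ⟨y, hy1, hy2⟩ := h x
          rw [hy1, hy2]
      rw [hs]
      refine isClosed_iInter fun x => isClosed_iUnion_of_finite fun y =>
        (closed_level_aux _ ((H : Subgroup G).isClosed_of_isOpen H.2.1) (E H) x y).inter
          (closed_level_aux _ ((K : Subgroup G).isClosed_of_isOpen K.2.1) (E K) x y)
    have huniv : (φ.eqLocus ψ : Set G) = Set.univ := by
      have h1' : closure ((Subgroup.closure (T : Set G) : Subgroup G) : Set G)
          ⊆ (φ.eqLocus ψ : Set G) := closure_minimal hle hclosed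
      have h2' : closure ((Subgroup.closure (T : Set G) : Subgroup G) : Set G) = Set.univ := by
        have := congrArg (fun K : Subgroup G => (K : Set G)) hT
        simpa [Subgroup.topologicalClosure_coe] using this
      rw [h2'] at h1'
      exact Set.eq_univ_of_univ_subset h1'
    refine MonoidHom.ext fun g => ?_
    have hg : g ∈ (φ.eqLocus ψ : Set G) := by rw [huniv]; trivial
    exact hg
  apply Subtype.ext
  ext g
  rw [mem_iff_permRepAux (H : Subgroup G) (E H) g, mem_iff_permRepAux (K : Subgroup G) (E K) g,
    hEq, h2]
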